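/- arXiv:2505.15739 — 3 statements merged into one kernel-verified Lean document; each statement's English description precedes it below -/
import Mathlib

section
/- Let n ≥ 1 and let x_1, …, x_{n+1} be affinely independent points of ℝ^n (the vertices of a nondegenerate simplex S) all lying in the closed unit ball B_n = {x : ‖x‖ ≤ 1}. Let c = (1/(n+1))·Σ_{j=1}^{n+1} x_j be the centroid of S. Then for every integer m with 1 ≤ m ≤ n there exists a subset J ⊆ {1, …, n+1} of cardinality m such that, with g_J = (1/m)·Σ_{j∈J} x_j and ρ = √(mn/(n−m+1)), the point y_J = (1+ρ)·c − ρ·g_J satisfies ‖y_J‖ ≤ 1. -/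
set_option maxHeartbeats 1000000

open Finset RealInnerProductSpace

lemma filter_mem_powersetCard' {α : Type*} [DecidableEq α] (s : Finset α) (a : α)
    (ha : a ∈ s) (m : ℕ) :
    (s.powersetCard (m+1)).filter (fun J => a ∈ J)
      = ((s.erase a).powersetCard m).image (insert a) := by
  ext J
  simp only [Finset.mem_filter, Finset.mem_powersetCard, Finset.mem_image]
  constructor
  · rintro ⟨⟨hJs, hcard⟩, haJ⟩
    refine ⟨J.erase a, ⟨Finset.erase_subset_erase a hJs, ?_⟩, Finset.insert_erase haJ⟩
    rw [Finset.card_erase_of_mem haJ, hcard]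
    omega
  · rintro ⟨J', ⟨hJ's, hcard⟩, rfl⟩
    have haJ' : a ∉ J' := fun h => (Finset.mem_erase.mp (hJ's h)).1 rfl
    refine ⟨⟨?_, ?_⟩, Finset.mem_insert_self a J'⟩
    · exact Finset.insert_subset ha (hJ's.trans (Finset.erase_subset a s))
    · rw [Finset.card_insert_of_notMem haJ', hcard]

lemma sum_filter_mem_powersetCard' {α M : Type*} [DecidableEq α] [AddCommMonoid M]
    (s : Finset α) (a : α) (ha : a ∈ s) (m : ℕ) (F : Finset α → M) :
    ∑ J ∈ (s.powersetCard (m+1)).filter (fun J => a ∈ J), F J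
      = ∑ J ∈ (s.erase a).powersetCard m, F (insert a J) := by
  rw [filter_mem_powersetCard' s a ha m]
  refine Finset.sum_image ?_
  intro J₁ h₁ J₂ h₂ h
  have h1 : a ∉ J₁ := fun hh => (Finset.mem_erase.mp ((Finset.mem_powersetCard.mp h₁).1 hh)).1 rfl
  have h2 : a ∉ J₂ := fun hh => (Finset.mem_erase.mp ((Finset.mem_powersetCard.mp h₂).1 hh)).1 rfl
  rw [← Finset.erase_insert h1, ← Finset.erase_insert h2, h]

lemma sum_sum_powersetCard_dep {α M : Type*} [DecidableEq α] [AddCommMonoid M]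
    (s : Finset α) (m : ℕ) (F : α → Finset α → M) :
    ∑ J ∈ s.powersetCard (m+1), ∑ j ∈ J, F j J
      = ∑ j ∈ s, ∑ J ∈ (s.erase j).powersetCard m, F j (insert j J) := by
  have h1 : ∀ J ∈ s.powersetCard (m+1), ∑ j ∈ J, F j J
      = ∑ j ∈ s, if j ∈ J then F j J else 0 := by
    intro J hJ
    rw [Finset.sum_ite_mem, Finset.inter_eq_right.mpr (Finset.mem_powersetCard.mp hJ).1]
  rw [Finset.sum_congr rfl h1, Finset.sum_comm]
  refine Finset.sum_congr rfl fun j hj => ?_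
  rw [← Finset.sum_filter, sum_filter_mem_powersetCard' s j hj m (fun J => F j J)]

lemma sum_sum_powersetCard' {α : Type*} [DecidableEq α] (s : Finset α) (m : ℕ) (f : α → ℝ) :
    ∑ J ∈ s.powersetCard (m+1), ∑ j ∈ J, f j
      = ((s.card - 1).choose m : ℝ) * ∑ j ∈ s, f j := by
  rw [sum_sum_powersetCard_dep s m (fun j _ => f j)]
  have h2 : ∀ j ∈ s, (∑ J ∈ (s.erase j).powersetCard m, f j)
      = ((s.card - 1).choose m : ℝ) * f j := by
    intro j hj
    rw [Finset.sum_const, Finset.card_powersetCard, Finset.card_erase_of_mem hj, nsmul_eq_mul]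
  rw [Finset.sum_congr rfl h2, ← Finset.mul_sum]

lemma key_alg (nR mR ρ T a b C2 Qd Od : ℝ)
    (hm : 1 ≤ mR) (hmn : mR ≤ nR)
    (hρ2 : ρ^2 = mR*nR/(nR - mR + 1))
    (ha : (nR+1)*a = T*mR)
    (hb : nR*b = a*(mR-1))
    (hOd : Qd + Od = (nR+1)^2*C2) :
    T*(1+ρ)^2*C2 - 2*((1+ρ)*ρ)*(mR⁻¹*(a*((nR+1)*C2))) + ρ^2*(mR⁻¹^2*(a*Qd + b*Od))
      = T*Qd/(nR+1) := by
  have hm0 : mR ≠ 0 := by intro h; rw [h] at hm; linarith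
  have hn0 : nR ≠ 0 := by intro h; rw [h] at hmn; linarith
  have hn1 : nR + 1 ≠ 0 := by intro h; nlinarith
  have hd : nR - mR + 1 ≠ 0 := by intro h; nlinarith
  have hOd' : Od = (nR+1)^2*C2 - Qd := by linarith
  have ha' : a = T*mR/(nR+1) := by field_simp; linarith
  have hb' : b = a*(mR-1)/nR := by field_simp; linarith
  have hmid : mR⁻¹*(a*((nR+1)*C2)) = T*C2 := by
    rw [ha']; field_simp
  rw [hmid, hOd', ha', hb', ha']
  have step : ∀ X : ℝ, T*(1+ρ)^2*C2 - 2*((1+ρ)*ρ)*(T*C2) + X = T*C2 - ρ^2*(T*C2) + X := by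
    intro X; ring
  rw [step, hρ2]
  field_simp
  ring

/-- **Theorem 1.** If the vertices `x 0, …, x n` of a nondegenerate simplex in ℝⁿ all lie in the
closed unit ball, then for every `m` with `1 ≤ m ≤ n` there is a set `J` of `m` indices such that
the point `y_J = (1+ρ)·c − ρ·g_J` (with `c` the centroid of the simplex, `g_J` the centroid of the
corresponding face, `ρ = √(mn/(n−m+1))`) lies in the unit ball. -/
theorem simplex_in_ball_has_suitable_face
    (n : ℕ) (hn : 1 ≤ n) (x : Fin (n + 1) → EuclideanSpace ℝ (Fin n))
    (hind : AffineIndependent ℝ x)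
    (hx : ∀ i, ‖x i‖ ≤ 1)
    (c : EuclideanSpace ℝ (Fin n))
    (hc : c = ((n : ℝ) + 1)⁻¹ • ∑ j, x j)
    (m : ℕ) (hm1 : 1 ≤ m) (hm2 : m ≤ n) :
    ∃ J : Finset (Fin (n + 1)), J.card = m ∧
      ‖(1 + Real.sqrt ((m * n : ℝ) / ((n : ℝ) - m + 1))) • c -
        Real.sqrt ((m * n : ℝ) / ((n : ℝ) - m + 1)) • ((m : ℝ)⁻¹ • ∑ j ∈ J, x j)‖ ≤ 1 := by
  classical
  obtain ⟨mp, rfl⟩ : ∃ mp, m = mp + 1 := ⟨m - 1, by omega⟩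
  have hmR1 : (1:ℝ) ≤ ((mp+1 : ℕ) : ℝ) := by push_cast; linarith
  have hmnR : ((mp+1 : ℕ) : ℝ) ≤ (n:ℝ) := by exact_mod_cast hm2
  have hdpos : (0:ℝ) < (n:ℝ) - ((mp+1 : ℕ) : ℝ) + 1 := by linarith
  have hrnn : (0:ℝ) ≤ (((mp+1 : ℕ) : ℝ) * (n : ℝ)) / ((n:ℝ) - ((mp+1 : ℕ) : ℝ) + 1) := by
    apply div_nonneg _ (le_of_lt hdpos)
    positivity
  set ρ : ℝ := Real.sqrt ((((mp+1 : ℕ) : ℝ) * (n : ℝ)) / ((n:ℝ) - ((mp+1 : ℕ) : ℝ) + 1)) with hρdef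
  have hρ0 : 0 ≤ ρ := Real.sqrt_nonneg _
  have hρ2 : ρ^2 = (((mp+1 : ℕ) : ℝ) * (n : ℝ)) / ((n:ℝ) - ((mp+1 : ℕ) : ℝ) + 1) :=
    Real.sq_sqrt hrnn
  set P : Finset (Finset (Fin (n+1))) := Finset.univ.powersetCard (mp+1) with hP
  have hucard : (Finset.univ : Finset (Fin (n+1))).card = n + 1 := by simp
  -- expansion of each squared norm
  have expand : ∀ J : Finset (Fin (n+1)),
      ‖(1+ρ) • c - ρ • (((mp+1 : ℕ) : ℝ)⁻¹ • ∑ j ∈ J, x j)‖^2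
      = (1+ρ)^2*‖c‖^2 - 2*((1+ρ)*ρ)*((((mp+1 : ℕ) : ℝ))⁻¹ * ∑ j ∈ J, ⟪c, x j⟫)
        + ρ^2*((((mp+1 : ℕ) : ℝ))⁻¹^2 * ∑ j ∈ J, ∑ k ∈ J, ⟪x j, x k⟫) := by
    intro J
    rw [norm_sub_sq_real]
    have e1 : ‖(1+ρ) • c‖^2 = (1+ρ)^2 * ‖c‖^2 := by
      rw [norm_smul, Real.norm_eq_abs, mul_pow, sq_abs]
    have e2 : ⟪(1+ρ) • c, ρ • (((mp+1 : ℕ) : ℝ)⁻¹ • ∑ j ∈ J, x j)⟫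
        = (1+ρ)*ρ*((((mp+1 : ℕ) : ℝ))⁻¹ * ∑ j ∈ J, ⟪c, x j⟫) := by
      rw [real_inner_smul_left, real_inner_smul_right, real_inner_smul_right, inner_sum]
      ring
    have e3 : ‖ρ • (((mp+1 : ℕ) : ℝ)⁻¹ • ∑ j ∈ J, x j)‖^2
        = ρ^2 * ((((mp+1 : ℕ) : ℝ))⁻¹^2 * ∑ j ∈ J, ∑ k ∈ J, ⟪x j, x k⟫) := by
      rw [norm_smul, norm_smul, Real.norm_eq_abs, Real.norm_eq_abs, mul_pow, mul_pow,
        sq_abs, sq_abs, ← real_inner_self_eq_norm_sq, sum_inner]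
      rw [Finset.sum_congr rfl (fun j _ => inner_sum J x (x j))]
    rw [e1, e2, e3]
    ring
  -- basic vector identities
  have hX : ∑ j, x j = ((n:ℝ)+1) • c := by
    rw [hc, smul_smul, mul_inv_cancel₀ (by positivity), one_smul]
  have hU : ∑ j, ⟪c, x j⟫ = ((n:ℝ)+1) * ‖c‖^2 := by
    rw [← inner_sum, hX, real_inner_smul_right, real_inner_self_eq_norm_sq]
  have hQd_le : ∑ j, ⟪x j, x j⟫ ≤ (n:ℝ)+1 := by
    calc ∑ j, ⟪x j, x j⟫ = ∑ j : Fin (n+1), ‖x j‖^2 := by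
          exact Finset.sum_congr rfl fun j _ => real_inner_self_eq_norm_sq (x j)
      _ ≤ ∑ _j : Fin (n+1), (1:ℝ) :=
          Finset.sum_le_sum (fun j _ => by nlinarith [hx j, norm_nonneg (x j)])
      _ = (n:ℝ)+1 := by simp
  have hOdEq : ∑ j, ⟪x j, x j⟫ + ∑ j, ∑ k ∈ Finset.univ.erase j, ⟪x j, x k⟫
      = ((n:ℝ)+1)^2*‖c‖^2 := by
    have h1 : ∀ j : Fin (n+1), ⟪x j, x j⟫ + ∑ k ∈ Finset.univ.erase j, ⟪x j, x k⟫
        = ∑ k, ⟪x j, x k⟫ := fun j =>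
      Finset.add_sum_erase Finset.univ (fun k => (inner ℝ (x j) (x k) : ℝ)) (Finset.mem_univ j)
    calc ∑ j, ⟪x j, x j⟫ + ∑ j, ∑ k ∈ Finset.univ.erase j, ⟪x j, x k⟫
        = ∑ j, (⟪x j, x j⟫ + ∑ k ∈ Finset.univ.erase j, ⟪x j, x k⟫) := by
          rw [Finset.sum_add_distrib]
      _ = ∑ j, ∑ k, ⟪x j, x k⟫ := Finset.sum_congr rfl fun j _ => h1 j
      _ = ⟪∑ j, x j, ∑ k, x k⟫ := by
          rw [sum_inner]
          exact Finset.sum_congr rfl fun j _ => (inner_sum _ _ _).symm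
      _ = ((n:ℝ)+1)^2*‖c‖^2 := by
          rw [hX, real_inner_smul_left, real_inner_smul_right, real_inner_self_eq_norm_sq]
          ring
  -- the linear sum over P
  have hS : ∑ J ∈ P, ∑ j ∈ J, ⟪c, x j⟫
      = (n.choose mp : ℝ) * (((n:ℝ)+1) * ‖c‖^2) := by
    have := sum_sum_powersetCard' (Finset.univ : Finset (Fin (n+1))) mp (fun j => ⟪c, x j⟫)
    simp only [hucard, Nat.add_sub_cancel] at this
    rw [hP, this, hU]
  -- the quadratic sum over P
  have hT2 : ∃ b : ℝ, (n:ℝ) * b = (n.choose mp : ℝ) * (mp : ℝ) ∧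
      ∑ J ∈ P, ∑ j ∈ J, ∑ k ∈ J, ⟪x j, x k⟫
        = (n.choose mp : ℝ) * (∑ j, ⟪x j, x j⟫)
          + b * ∑ j, ∑ k ∈ Finset.univ.erase j, ⟪x j, x k⟫ := by
    have hsplit : ∀ J ∈ P, ∑ j ∈ J, ∑ k ∈ J, ⟪x j, x k⟫
        = ∑ j ∈ J, ⟪x j, x j⟫ + ∑ j ∈ J, ∑ k ∈ J.erase j, ⟪x j, x k⟫ := by
      intro J hJ
      rw [← Finset.sum_add_distrib]
      refine Finset.sum_congr rfl fun j hj => ?_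
      exact (Finset.add_sum_erase _ _ hj).symm
    rw [hP, Finset.sum_congr rfl hsplit, Finset.sum_add_distrib]
    have hdiag : ∑ J ∈ Finset.univ.powersetCard (mp+1), ∑ j ∈ J, ⟪x j, x j⟫
        = (n.choose mp : ℝ) * ∑ j, ⟪x j, x j⟫ := by
      have := sum_sum_powersetCard' (Finset.univ : Finset (Fin (n+1))) mp
        (fun j => ⟪x j, x j⟫)
      simpa only [hucard, Nat.add_sub_cancel] using this
    have hoff : ∑ J ∈ Finset.univ.powersetCard (mp+1), ∑ j ∈ J, ∑ k ∈ J.erase j, ⟪x j, x k⟫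
        = ∑ j, ∑ J ∈ (Finset.univ.erase j).powersetCard mp, ∑ k ∈ J, ⟪x j, x k⟫ := by
      rw [sum_sum_powersetCard_dep (Finset.univ : Finset (Fin (n+1))) mp
        (fun j J => ∑ k ∈ J.erase j, ⟪x j, x k⟫)]
      refine Finset.sum_congr rfl fun j hj => Finset.sum_congr rfl fun J hJ => ?_
      have hjJ : j ∉ J := fun h =>
        (Finset.mem_erase.mp ((Finset.mem_powersetCard.mp hJ).1 h)).1 rfl
      rw [Finset.erase_insert hjJ]
    rcases mp with _ | mq
    · refine ⟨0, by simp, ?_⟩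
      rw [hdiag, hoff]
      simp [Finset.powersetCard_zero]
    · refine ⟨((n-1).choose mq : ℝ), ?_, ?_⟩
      · have hnat : n * (n-1).choose mq = n.choose (mq+1) * (mq+1) := by
          have h1 : n - 1 + 1 = n := by omega
          have := Nat.add_one_mul_choose_eq (n-1) mq
          simp only [Nat.succ_eq_add_one, h1] at this
          exact this
        exact_mod_cast hnat
      · rw [hdiag, hoff]
        have hinner : ∀ j : Fin (n+1),
            ∑ J ∈ (Finset.univ.erase j).powersetCard (mq+1), ∑ k ∈ J, ⟪x j, x k⟫
            = ((n-1).choose mq : ℝ) * ∑ k ∈ Finset.univ.erase j, ⟪x j, x k⟫ := by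
          intro j
          have := sum_sum_powersetCard' ((Finset.univ : Finset (Fin (n+1))).erase j) mq
            (fun k => ⟪x j, x k⟫)
          rwa [Finset.card_erase_of_mem (Finset.mem_univ j), hucard, Nat.add_sub_cancel]
            at this
        rw [Finset.sum_congr rfl fun j _ => hinner j, ← Finset.mul_sum]
  obtain ⟨b, hbrel, hT2⟩ := hT2
  -- choose identity for a
  have harel : ((n:ℝ)+1) * (n.choose mp : ℝ) = ((n+1).choose (mp+1) : ℝ) * ((mp+1 : ℕ) : ℝ) := by
    have := Nat.add_one_mul_choose_eq n mp
    exact_mod_cast this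
  have hPcard : P.card = (n+1).choose (mp+1) := by
    rw [hP, Finset.card_powersetCard, hucard]
  -- total sum identity
  have total : ∑ J ∈ P, ‖(1+ρ) • c - ρ • (((mp+1 : ℕ) : ℝ)⁻¹ • ∑ j ∈ J, x j)‖^2
      = ((n+1).choose (mp+1) : ℝ) * (∑ j, ⟪x j, x j⟫) / ((n:ℝ)+1) := by
    rw [Finset.sum_congr rfl fun J _ => expand J, Finset.sum_add_distrib,
      Finset.sum_sub_distrib, Finset.sum_const, hPcard, nsmul_eq_mul]
    simp only [← Finset.mul_sum]
    rw [hS, hT2]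
    have key := key_alg (n:ℝ) (((mp+1 : ℕ) : ℝ)) ρ ((n+1).choose (mp+1) : ℝ) (n.choose mp : ℝ) b
      (‖c‖^2) (∑ j, ⟪x j, x j⟫) (∑ j, ∑ k ∈ Finset.univ.erase j, ⟪x j, x k⟫)
      hmR1 hmnR hρ2 harel (by push_cast at hbrel ⊢; linarith) hOdEq
    linear_combination key
  -- conclude
  have hPne : P.Nonempty := Finset.card_pos.mp (by rw [hPcard]; exact Nat.choose_pos (by omega))
  have hineq : ∑ J ∈ P, ‖(1+ρ) • c - ρ • (((mp+1 : ℕ) : ℝ)⁻¹ • ∑ j ∈ J, x j)‖^2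
      ≤ ∑ _J ∈ P, (1:ℝ) := by
    rw [total, Finset.sum_const, hPcard, nsmul_eq_mul, mul_one]
    rw [div_le_iff₀ (by positivity : (0:ℝ) < (n:ℝ)+1)]
    have hT0 : (0:ℝ) ≤ ((n+1).choose (mp+1) : ℝ) := by positivity
    nlinarith [hQd_le, hT0]
  obtain ⟨J, hJP, hJle⟩ := Finset.exists_le_of_sum_le hPne hineq
  refine ⟨J, (Finset.mem_powersetCard.mp hJP).2, ?_⟩
  nlinarith [hJle, norm_nonneg ((1+ρ) • c - ρ • (((mp+1 : ℕ) : ℝ)⁻¹ • ∑ j ∈ J, x j))]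
end

section
/- Let n ≥ 1 and let x_1, …, x_{n+1} be points of ℝ^n all lying in the closed unit ball B_n, with centroid c = (1/(n+1))·Σ_{j=1}^{n+1} x_j. Then there exists an index j with ‖2c − x_j‖ ≤ 1; that is, some vertex of the simplex is suitable. -/
open Finset

/-- For any points `x 0, …, x n` of ℝⁿ lying in the closed unit ball, with centroid `c`, some
vertex is suitable: there is an index `j` with `‖2c − x j‖ ≤ 1`. -/
theorem exists_suitable_vertex
    (n : ℕ) (hn : 1 ≤ n) (x : Fin (n + 1) → EuclideanSpace ℝ (Fin n))
    (hx : ∀ i, ‖x i‖ ≤ 1)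
    (c : EuclideanSpace ℝ (Fin n))
    (hc : c = ((n : ℝ) + 1)⁻¹ • ∑ j, x j) :
    ∃ j : Fin (n + 1), ‖(2 : ℝ) • c - x j‖ ≤ 1 := by
  have hnpos : (0 : ℝ) < (n : ℝ) + 1 := by positivity
  have hsum : ∑ j, inner ℝ c (c - x j) = (0 : ℝ) := by
    have h1 : ∑ j, (inner ℝ c (c - x j) : ℝ)
        = ((n : ℝ) + 1) * inner ℝ c c - inner ℝ c (∑ j, x j) := by
      simp only [inner_sub_right, Finset.sum_sub_distrib, inner_sum]
      simp [Finset.card_fin, mul_comm]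
    have h2 : (inner ℝ c (∑ j, x j) : ℝ) = ((n : ℝ) + 1) * inner ℝ c c := by
      have : (∑ j, x j) = ((n : ℝ) + 1) • c := by
        rw [hc, smul_smul, mul_inv_cancel₀ (ne_of_gt hnpos), one_smul]
      rw [this, real_inner_smul_right]
    rw [h1, h2]; ring
  have hex : ∃ j : Fin (n + 1), (inner ℝ c (c - x j) : ℝ) ≤ 0 := by
    by_contra h
    push_neg at h
    have : (0 : ℝ) < ∑ j, inner ℝ c (c - x j) :=
      Finset.sum_pos (fun j _ => h j) ⟨0, Finset.mem_univ 0⟩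
    rw [hsum] at this; exact lt_irrefl _ this
  obtain ⟨j, hj⟩ := hex
  refine ⟨j, ?_⟩
  have hsq : ‖(2 : ℝ) • c - x j‖ ^ 2 = 4 * inner ℝ c (c - x j) + ‖x j‖ ^ 2 := by
    rw [← real_inner_self_eq_norm_sq, ← real_inner_self_eq_norm_sq]
    simp only [inner_sub_left, inner_sub_right, real_inner_smul_left, real_inner_smul_right,
      real_inner_comm (x j) c]
    ring
  have hxj : ‖x j‖ ^ 2 ≤ 1 := by
    have := hx j
    nlinarith [norm_nonneg (x j)]
  have : ‖(2 : ℝ) • c - x j‖ ^ 2 ≤ 1 := by rw [hsq]; nlinarith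
  nlinarith [norm_nonneg ((2 : ℝ) • c - x j), this]
end

section
/- Let n ≥ 2 and let x_1, …, x_{n+1} ∈ ℝ^n satisfy ‖x_i‖ = 1 for all i, and let c = (1/(n+1))·Σ_{j=1}^{n+1} x_j. Fix an integer m with 1 ≤ m ≤ n−1 and set ρ' = √((m+1)n/(n−m)). Suppose Σ_{2 ≤ i < j ≤ n+1} ⟨x_i, x_j⟩ ≤ ((n−1)/2)·Σ_{j=2}^{n+1} ⟨x_1, x_j⟩. Then, summing over all subsets J' ⊆ {1,…,n+1} with 1 ∈ J' and |J'| = m+1, and writing g_{J'} = (1/(m+1))·Σ_{j∈J'} x_j and y_{J'} = (1+ρ')·c − ρ'·g_{J'}, one has Σ_{J'} ‖y_{J'}‖² ≤ C(n,m), where C(n,m) is the binomial coefficient n choose m. -/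
open Finset RealInnerProductSpace

set_option maxHeartbeats 2000000

open Finset RealInnerProductSpace

lemma count_subsets {N : ℕ} (k : ℕ) (T : Finset (Fin N)) (hT : T.card ≤ k) :
    (Finset.univ.powerset.filter (fun J => T ⊆ J ∧ J.card = k)).card
      = (N - T.card).choose (k - T.card) := by
  have hTc : Tᶜ.card = N - T.card := by
    rw [Finset.card_compl]; simp
  rw [← hTc, ← Finset.card_powersetCard (k - T.card) Tᶜ]
  apply Finset.card_bij (fun J _ => J \ T)
  · intro J hJ
    simp only [mem_filter, mem_powerset] at hJ
    rw [mem_powersetCard]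
    exact ⟨fun a ha => by simp [Finset.mem_sdiff.mp ha],
      by rw [card_sdiff_of_subset hJ.2.1, hJ.2.2]⟩
  · intro J hJ J' hJ' h
    simp only [mem_filter, mem_powerset] at hJ hJ'
    have : J \ T ∪ T = J' \ T ∪ T := by rw [h]
    rwa [Finset.sdiff_union_of_subset hJ.2.1, Finset.sdiff_union_of_subset hJ'.2.1] at this
  · intro K hK
    rw [mem_powersetCard] at hK
    refine ⟨K ∪ T, ?_, ?_⟩
    · simp only [mem_filter, mem_powerset]
      refine ⟨subset_univ _, Finset.subset_union_right, ?_⟩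
      rw [Finset.card_union_of_disjoint, hK.2]
      · omega
      · exact Finset.disjoint_right.mpr fun a ha hK' => by
          have := hK.1 hK'; simp [Finset.mem_compl] at this; exact this ha
    · rw [Finset.union_sdiff_right, Finset.sdiff_eq_self_of_disjoint]
      exact Finset.disjoint_right.mpr fun a ha hK' => by
        have := hK.1 hK'; simp [Finset.mem_compl] at this; exact this ha

lemma sum_mem_swap {α : Type*} [Fintype α] [DecidableEq α] (F : Finset (Finset α)) (f : α → ℝ) :
    ∑ J ∈ F, ∑ j ∈ J, f j = ∑ j : α, ((F.filter (fun J => j ∈ J)).card : ℝ) * f j := by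
  have h1 : ∀ J ∈ F, ∑ j ∈ J, f j = ∑ j : α, if j ∈ J then f j else 0 := by
    intro J _
    rw [Finset.sum_ite_mem, Finset.univ_inter]
  rw [Finset.sum_congr rfl h1, Finset.sum_comm]
  refine Finset.sum_congr rfl fun j _ => ?_
  rw [← Finset.sum_filter, Finset.sum_const, nsmul_eq_mul]

lemma sum_mem_swap2 {α : Type*} [Fintype α] [DecidableEq α] (F : Finset (Finset α))
    (g : α → α → ℝ) :
    ∑ J ∈ F, ∑ i ∈ J, ∑ j ∈ J, g i j
      = ∑ i : α, ∑ j : α, ((F.filter (fun J => i ∈ J ∧ j ∈ J)).card : ℝ) * g i j := by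
  have h1 : ∀ J ∈ F, ∑ i ∈ J, ∑ j ∈ J, g i j
      = ∑ i : α, ∑ j : α, if i ∈ J ∧ j ∈ J then g i j else 0 := by
    intro J _
    have : ∀ i : α, (∑ j : α, if i ∈ J ∧ j ∈ J then g i j else 0)
        = if i ∈ J then ∑ j ∈ J, g i j else 0 := by
      intro i
      by_cases hi : i ∈ J <;>
        simp [hi, Finset.sum_ite_mem, Finset.univ_inter]
    simp only [this, Finset.sum_ite_mem, Finset.univ_inter]
  rw [Finset.sum_congr rfl h1]
  rw [Finset.sum_comm]
  refine Finset.sum_congr rfl fun i _ => ?_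
  rw [Finset.sum_comm]
  refine Finset.sum_congr rfl fun j _ => ?_
  rw [← Finset.sum_filter, Finset.sum_const, nsmul_eq_mul]

lemma sum_offdiag {k : ℕ} (f : Fin k → Fin k → ℝ) (hsym : ∀ i j, f i j = f j i)
    (s : Finset (Fin k)) :
    ∑ i ∈ s, ∑ j ∈ s.erase i, f i j
      = 2 * ∑ p ∈ (s ×ˢ s).filter (fun p => p.1 < p.2), f p.1 p.2 := by
  have h1 : ∑ i ∈ s, ∑ j ∈ s.erase i, f i j
      = ∑ p ∈ (s ×ˢ s).filter (fun p => p.1 ≠ p.2), f p.1 p.2 := by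
    rw [Finset.sum_filter, Finset.sum_product]
    refine Finset.sum_congr rfl fun i _ => ?_
    rw [← Finset.sum_filter]
    congr 1
    ext j
    simp [Finset.mem_erase, ne_comm, eq_comm, and_comm]
  have h2 : (s ×ˢ s).filter (fun p : Fin k × Fin k => p.1 ≠ p.2)
      = (s ×ˢ s).filter (fun p => p.1 < p.2) ∪ (s ×ˢ s).filter (fun p => p.2 < p.1) := by
    rw [← Finset.filter_or]
    refine Finset.filter_congr fun p _ => ?_
    constructor
    · intro h; exact lt_or_gt_of_ne h
    · rintro (h | h); exacts [ne_of_lt h, ne_of_gt h]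
  have hdisj : Disjoint ((s ×ˢ s).filter (fun p : Fin k × Fin k => p.1 < p.2))
      ((s ×ˢ s).filter (fun p => p.2 < p.1)) := by
    rw [Finset.disjoint_left]
    intro p hp hq
    simp only [Finset.mem_filter] at hp hq
    exact absurd hq.2 (lt_asymm hp.2)
  have h3 : ∑ p ∈ (s ×ˢ s).filter (fun p : Fin k × Fin k => p.2 < p.1), f p.1 p.2
      = ∑ p ∈ (s ×ˢ s).filter (fun p => p.1 < p.2), f p.1 p.2 := by
    apply Finset.sum_nbij' (fun p => Prod.swap p) (fun p => Prod.swap p) <;>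
      simp_all [Finset.mem_filter, Finset.mem_product, hsym]
  rw [h1, h2, Finset.sum_union hdisj, h3]
  ring

lemma final_scalar (nn mm ρ A B a b e S : ℝ)
    (h2n : 2 ≤ nn) (h1m : 1 ≤ mm) (hmn : mm + 1 ≤ nn)
    (hρ0 : 0 ≤ ρ) (hρ2 : ρ^2 * (nn - mm) = (mm+1)*nn)
    (ha : 0 ≤ a) (hb1 : nn * b = mm * a) (hb2 : (nn-1)*e = (mm-1)*b)
    (hAB : 2*B ≤ (nn-1)*A)
    (hsum : ((nn+1)^2*(mm+1)^2) * S
      = (mm+1)^2*(1+ρ)^2*a*((nn+1)+2*A+2*B)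
        - 2*ρ*(1+ρ)*(mm+1)*(nn+1)*(a*(1+A)+b*(nn+A+2*B))
        + ρ^2*(nn+1)^2*(a+nn*b+2*b*A+2*e*B)) :
    S ≤ a := by
  set cst : ℝ := nn*(nn-1)*(mm+1)^2*(nn-mm)
      + (mm+1)*nn*(nn*(nn-1)*(mm+1)^2 - 2*mm*(mm+1)*(nn-1)*(nn+1) + mm*(mm-1)*(nn+1)^2)
    with hcst
  set X : ℝ := ρ*(2*(mm+1)*(nn-1)*(nn-mm)^2) with hXdef
  have hXnn : 0 ≤ X := by
    apply mul_nonneg hρ0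
    have h1 : (0:ℝ) ≤ mm + 1 := by linarith
    have h2 : (0:ℝ) ≤ nn - 1 := by linarith
    positivity
  have hX2 : X^2 = 4*nn*mm*((mm+1)^2*(nn+1)^2*(nn-mm)^2)*(nn-mm-1) + cst^2 := by
    rw [hXdef, hcst]
    linear_combination (4*(mm+1)^2*(nn-1)^2*(nn-mm)^3) * hρ2
  have hD : 0 ≤ 4*nn*mm*((mm+1)^2*(nn+1)^2*(nn-mm)^2)*(nn-mm-1) := by
    have h1 : (0:ℝ) ≤ 4*nn*mm := by nlinarith
    have h2 : (0:ℝ) ≤ (mm+1)^2*(nn+1)^2*(nn-mm)^2 := by positivity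
    have h3 : (0:ℝ) ≤ nn-mm-1 := by linarith
    exact mul_nonneg (mul_nonneg h1 h2) h3
  have hcstX : 0 ≤ cst + X := by
    nlinarith [hXnn, hX2, hD, sq_nonneg (X + cst), sq_nonneg (X - cst)]
  have key : nn*(nn-1)*(nn-mm) * ((nn+1)^2*(mm+1)^2*a - ((nn+1)^2*(mm+1)^2) * S)
      = (cst + X) * ((nn-1)*A - 2*B) * a := by
    rw [hsum, hcst, hXdef]
    linear_combination (4*mm*ρ*B + 2*mm*ρ*A + 4*mm^2*ρ*B + 2*mm^2*ρ*A + (-2)*nn*B + (-4)*nn*ρ*B + (-2)*nn*ρ*A + (-8)*nn*mm*B + (-2)*nn*mm*A + 2*nn*mm*ρ + (-4)*nn*mm*ρ*B + (-2)*nn*mm*ρ*A + (-6)*nn*mm^2*B + (-2)*nn*mm^2*A + 2*nn*mm^2*ρ + (-1)*nn^2 + 4*nn^2*B + 2*nn^2*A + (-2)*nn^2*ρ + (-3)*nn^2*mm + 2*nn^2*mm*A + (-2)*nn^2*mm*ρ + (-4)*nn^2*mm*ρ*B + (-2)*nn^2*mm*ρ*A + (-2)*nn^2*mm^2 + (-4)*nn^2*mm^2*B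 + (-4)*nn^2*mm^2*ρ*B + (-2)*nn^2*mm^2*ρ*A + 1*nn^3 + 6*nn^3*B + 4*nn^3*ρ*B + 2*nn^3*ρ*A + 1*nn^3*mm + 8*nn^3*mm*B + 2*nn^3*mm*A + (-2)*nn^3*mm*ρ + 4*nn^3*mm*ρ*B + 2*nn^3*mm*ρ*A + 2*nn^3*mm^2*B + 2*nn^3*mm^2*A + (-2)*nn^3*mm^2*ρ + 1*nn^4 + (-2)*nn^4*A + 2*nn^4*ρ + 3*nn^4*mm + (-2)*nn^4*mm*A + 2*nn^4*mm*ρ + 2*nn^4*mm^2 + (-1)*nn^5 + (-1)*nn^5*mm) * hb1 + (2*nn*mm*ρ^2*B + (-2)*nn^2*ρ^2*B + 4*nn^2*mm*ρ^2*B + (-4)*nn^3*ρ^2*B + 2*nn^3*mm*ρ^2*B + (-2)*nn^4*ρ^2*B) * hb2 + ((-2)*nn*B*b + 2*nn*B*a + (-6)*nn*mm*B*b + 4*nn*mm*B*a + (-2)*nn*mm*A*b + 2*nn*mm*A*a + 1*nn*mm^2*a + 2*nn*mm^2*B*a + 2*nn*mm^2*A*a + (-1)*nn^2*b + 1*nn^2*a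 + 4*nn^2*B*b + (-2)*nn^2*B*a + 2*nn^2*A*b + (-2)*nn^2*A*a + (-2)*nn^2*mm*b + (-4)*nn^2*mm*B*b + (-4)*nn^2*mm*B*a + (-4)*nn^2*mm*A*a + (-2)*nn^2*mm^2*B*a + (-2)*nn^2*mm^2*A*a + 1*nn^3*b + 6*nn^3*B*b + 2*nn^3*A*a + 2*nn^3*mm*B*b + 2*nn^3*mm*A*b + 2*nn^3*mm*A*a + (-1)*nn^3*mm^2*a + 1*nn^4*b + (-1)*nn^4*a + (-2)*nn^4*A*b + 2*nn^4*mm*b + (-1)*nn^5*b) * hρ2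
  have hW : 0 ≤ (nn-1)*A - 2*B := by linarith
  have hK2 : 0 < nn*(nn-1)*(nn-mm) :=
    mul_pos (mul_pos (by linarith) (by linarith)) (by linarith)
  have hR : 0 ≤ (cst + X) * ((nn-1)*A - 2*B) * a := mul_nonneg (mul_nonneg hcstX hW) ha
  have hQ : 0 ≤ (nn+1)^2*(mm+1)^2*a - ((nn+1)^2*(mm+1)^2) * S := by
    by_contra h
    push_neg at h
    have hneg : nn*(nn-1)*(nn-mm) * ((nn+1)^2*(mm+1)^2*a - ((nn+1)^2*(mm+1)^2) * S) < 0 :=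
      mul_neg_of_pos_of_neg hK2 h
    rw [key] at hneg
    linarith
  have hP2 : 0 < (nn+1)^2*(mm+1)^2 :=
    mul_pos (pow_pos (by linarith) 2) (pow_pos (by linarith) 2)
  nlinarith [hQ, hP2, mul_pos hP2 hP2]

/-- Key averaging step in the proof of Theorem 2: for a simplex inscribed in the unit sphere with
suitable vertex `x 0` (expressed via inequality (3.1)), the sum of `‖y_{J'}‖²` over all sets `J'`
of `m + 1` indices containing `0` is at most `C(n, m)`. -/
theorem sum_sq_norms_y_le_choose
    (n : ℕ) (hn : 2 ≤ n) (x : Fin (n + 1) → EuclideanSpace ℝ (Fin n))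
    (hnorm : ∀ i, ‖x i‖ = 1)
    (c : EuclideanSpace ℝ (Fin n))
    (hc : c = ((n : ℝ) + 1)⁻¹ • ∑ j, x j)
    (m : ℕ) (hm1 : 1 ≤ m) (hm2 : m ≤ n - 1)
    (hineq : ∑ p ∈ Finset.univ.filter
          (fun p : Fin (n + 1) × Fin (n + 1) => 0 < p.1 ∧ p.1 < p.2),
          ⟪x p.1, x p.2⟫ ≤
        ((n : ℝ) - 1) / 2 * ∑ j ∈ Finset.univ.filter (fun j : Fin (n + 1) => j ≠ 0),
          ⟪x 0, x j⟫) :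
    ∑ J ∈ Finset.univ.powerset.filter
        (fun J : Finset (Fin (n + 1)) => (0 : Fin (n + 1)) ∈ J ∧ J.card = m + 1),
      ‖(1 + Real.sqrt (((m : ℝ) + 1) * n / ((n : ℝ) - m))) • c -
        Real.sqrt (((m : ℝ) + 1) * n / ((n : ℝ) - m)) •
          (((m : ℝ) + 1)⁻¹ • ∑ j ∈ J, x j)‖ ^ 2 ≤ (n.choose m : ℝ) := by
  have hmn : m < n := by omega
  set ρ : ℝ := Real.sqrt (((m : ℝ) + 1) * n / ((n : ℝ) - m)) with hρdef
  set F : Finset (Finset (Fin (n + 1))) := Finset.univ.powerset.filter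
      (fun J : Finset (Fin (n + 1)) => (0 : Fin (n + 1)) ∈ J ∧ J.card = m + 1) with hFdef
  set A : ℝ := ∑ j ∈ Finset.univ.filter (fun j : Fin (n + 1) => j ≠ 0), ⟪x 0, x j⟫ with hAdef
  set B : ℝ := ∑ p ∈ Finset.univ.filter
      (fun p : Fin (n + 1) × Fin (n + 1) => 0 < p.1 ∧ p.1 < p.2), ⟪x p.1, x p.2⟫ with hBdef
  -- basic real facts
  have hncast : (2:ℝ) ≤ (n:ℝ) := by exact_mod_cast hn
  have hmcast : (1:ℝ) ≤ (m:ℝ) := by exact_mod_cast hm1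
  have hmncast : (m:ℝ) + 1 ≤ (n:ℝ) := by exact_mod_cast hmn
  have hnm0 : (0:ℝ) < (n:ℝ) - (m:ℝ) := by linarith
  have hρ0 : 0 ≤ ρ := Real.sqrt_nonneg _
  have hρ2 : ρ^2 * ((n:ℝ) - m) = ((m:ℝ)+1) * n := by
    rw [hρdef, Real.sq_sqrt (by positivity)]
    field_simp
  -- membership facts about F
  have hmem0 : ∀ J ∈ F, (0 : Fin (n+1)) ∈ J := fun J hJ =>
    ((Finset.mem_filter.mp hJ).2).1
  -- counting
  have hcF : F.card = n.choose m := by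
    have hFeq : F = Finset.univ.powerset.filter
        (fun J => ({0} : Finset (Fin (n+1))) ⊆ J ∧ J.card = m + 1) := by
      rw [hFdef]
      refine Finset.filter_congr fun J _ => ?_
      simp [Finset.singleton_subset_iff]
    rw [hFeq, count_subsets (m+1) _ (by simp)]
    simp
  have hcj : ∀ j : Fin (n+1), j ≠ 0 →
      (F.filter (fun J => j ∈ J)).card = (n-1).choose (m-1) := by
    intro j hj
    have hFeq : F.filter (fun J => j ∈ J) = Finset.univ.powerset.filter
        (fun J => ({0, j} : Finset (Fin (n+1))) ⊆ J ∧ J.card = m + 1) := by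
      rw [hFdef, Finset.filter_filter]
      refine Finset.filter_congr fun J _ => ?_
      simp only [Finset.insert_subset_iff, Finset.singleton_subset_iff]
      tauto
    have hcard2 : ({0, j} : Finset (Fin (n+1))).card = 2 := by
      rw [Finset.card_insert_of_notMem (by simp [Ne.symm hj]), Finset.card_singleton]
    rw [hFeq, count_subsets (m+1) _ (by rw [hcard2]; omega), hcard2]
    congr 1 <;> omega
  obtain ⟨N2, hcij, hrel2⟩ : ∃ N2 : ℕ,
      (∀ i j : Fin (n+1), i ≠ 0 → j ≠ 0 → i ≠ j →
        (F.filter (fun J => i ∈ J ∧ j ∈ J)).card = N2) ∧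
      (n-1) * N2 = (m-1) * ((n-1).choose (m-1)) := by
    have hTsub : ∀ i j : Fin (n+1), i ≠ 0 → j ≠ 0 → i ≠ j →
        F.filter (fun J => i ∈ J ∧ j ∈ J) = Finset.univ.powerset.filter
          (fun J => ({0, i, j} : Finset (Fin (n+1))) ⊆ J ∧ J.card = m + 1) := by
      intro i j hi hj hij
      rw [hFdef, Finset.filter_filter]
      refine Finset.filter_congr fun J _ => ?_
      simp only [Finset.insert_subset_iff, Finset.singleton_subset_iff]
      tauto
    have hcard3 : ∀ i j : Fin (n+1), i ≠ 0 → j ≠ 0 → i ≠ j →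
        ({0, i, j} : Finset (Fin (n+1))).card = 3 := by
      intro i j hi hj hij
      rw [Finset.card_insert_of_notMem (by simp [Ne.symm hi, Ne.symm hj]),
        Finset.card_insert_of_notMem (by simp [hij]), Finset.card_singleton]
    by_cases hm : 2 ≤ m
    · refine ⟨(n-2).choose (m-2), ?_, ?_⟩
      · intro i j hi hj hij
        rw [hTsub i j hi hj hij,
          count_subsets (m+1) _ (by rw [hcard3 i j hi hj hij]; omega),
          hcard3 i j hi hj hij]
        congr 1 <;> omega
      · have h := Nat.add_one_mul_choose_eq (n-2) (m-2)
        have e1 : n - 2 + 1 = n - 1 := by omega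
        have e2 : m - 2 + 1 = m - 1 := by omega
        rw [e1, e2] at h
        exact h.trans (Nat.mul_comm _ _)
    · have hm' : m = 1 := by omega
      refine ⟨0, ?_, by simp [hm']⟩
      intro i j hi hj hij
      rw [Finset.card_eq_zero, Finset.filter_eq_empty_iff]
      intro J hJ
      rintro ⟨hiJ, hjJ⟩
      have h0J := hmem0 J hJ
      have hsub : ({0, i, j} : Finset (Fin (n+1))) ⊆ J := by
        intro a ha
        simp only [Finset.mem_insert, Finset.mem_singleton] at ha
        rcases ha with rfl | rfl | rfl <;> assumption
      have h3 := Finset.card_le_card hsub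
      rw [hcard3 i j hi hj hij, (Finset.mem_filter.mp hJ).2.2] at h3
      omega
  have hrel1 : n * ((n-1).choose (m-1)) = m * (n.choose m) := by
    have h := Nat.add_one_mul_choose_eq (n-1) (m-1)
    have e1 : n - 1 + 1 = n := by omega
    have e2 : m - 1 + 1 = m := by omega
    rw [e1, e2] at h
    exact h.trans (Nat.mul_comm _ _)
  -- inner product basics
  have hdiag : ∀ i, ⟪x i, x i⟫ = (1:ℝ) := fun i => by
    rw [real_inner_self_eq_norm_sq, hnorm, one_pow]
  have hsym : ∀ i j : Fin (n+1), ⟪x i, x j⟫ = ⟪x j, x i⟫ := fun i j => real_inner_comm _ _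
  have hAerase : A = ∑ j ∈ Finset.univ.erase 0, ⟪x 0, x j⟫ := by
    rw [hAdef, Finset.filter_ne']
  have hcol0 : ∑ i : Fin (n+1), ⟪x i, x 0⟫ = 1 + A := by
    have h1 : ∑ i ∈ Finset.univ.erase 0, ⟪x i, x 0⟫ = A := by
      rw [hAerase]; exact Finset.sum_congr rfl fun i _ => hsym i 0
    rw [← Finset.sum_erase_add _ _ (Finset.mem_univ 0), hdiag 0, h1]
    ring
  have hupper : ∑ p ∈ (Finset.univ ×ˢ Finset.univ).filter
      (fun p : Fin (n+1) × Fin (n+1) => p.1 < p.2), ⟪x p.1, x p.2⟫ = A + B := by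
    rw [Finset.univ_product_univ]
    have hsplit : Finset.univ.filter (fun p : Fin (n+1) × Fin (n+1) => p.1 < p.2)
        = Finset.univ.filter (fun p => p.1 = 0 ∧ p.1 < p.2)
          ∪ Finset.univ.filter (fun p => 0 < p.1 ∧ p.1 < p.2) := by
      rw [← Finset.filter_or]
      refine Finset.filter_congr fun p _ => ?_
      rcases eq_or_ne p.1 0 with h | h
      · simp [h]
      · simp [h, Fin.pos_iff_ne_zero]
    have hdisj : Disjoint (Finset.univ.filter (fun p : Fin (n+1) × Fin (n+1) => p.1 = 0 ∧ p.1 < p.2))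
        (Finset.univ.filter (fun p => 0 < p.1 ∧ p.1 < p.2)) := by
      rw [Finset.disjoint_left]
      intro p hp hq
      simp only [Finset.mem_filter] at hp hq
      rw [hp.2.1] at hq
      exact lt_irrefl _ hq.2.1
    rw [hsplit, Finset.sum_union hdisj]
    have hfirst : ∑ p ∈ Finset.univ.filter
        (fun p : Fin (n+1) × Fin (n+1) => p.1 = 0 ∧ p.1 < p.2), ⟪x p.1, x p.2⟫
        = ∑ j ∈ Finset.univ.erase 0, ⟪x 0, x j⟫ := by
      apply Finset.sum_nbij' (fun p => p.2) (fun j => ((0 : Fin (n+1)), j))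
      · intro p hp
        simp only [Finset.mem_filter] at hp
        simp only [Finset.mem_erase, Finset.mem_univ, and_true]
        have hpos : (0 : Fin (n+1)) < p.2 := hp.2.1 ▸ hp.2.2
        exact Fin.pos_iff_ne_zero.mp hpos
      · intro j hj
        simp only [Finset.mem_erase, Finset.mem_univ, and_true] at hj
        simp only [Finset.mem_filter, Finset.mem_univ, true_and]
        exact Fin.pos_iff_ne_zero.mpr hj
      · intro p hp
        simp only [Finset.mem_filter] at hp
        exact Prod.ext hp.2.1.symm rfl
      · intro j _; rfl
      · intro p hp
        simp only [Finset.mem_filter] at hp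
        rw [hp.2.1]
    rw [hfirst, ← hAerase, ← hBdef]
  have hSS : ∑ i : Fin (n+1), ∑ j : Fin (n+1), ⟪x i, x j⟫ = ((n:ℝ)+1) + 2*A + 2*B := by
    have hrow : ∀ i : Fin (n+1), ∑ j : Fin (n+1), ⟪x i, x j⟫
        = 1 + ∑ j ∈ Finset.univ.erase i, ⟪x i, x j⟫ := by
      intro i
      rw [← Finset.sum_erase_add _ _ (Finset.mem_univ i), hdiag i]
      ring
    rw [Finset.sum_congr rfl (fun i _ => hrow i), Finset.sum_add_distrib, Finset.sum_const,
      Finset.card_univ, Fintype.card_fin, sum_offdiag _ hsym Finset.univ, hupper]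
    push_cast
    ring
  have hcx : ∀ j, ⟪c, x j⟫ = ((n:ℝ)+1)⁻¹ * ∑ i, ⟪x i, x j⟫ := by
    intro j
    rw [hc, real_inner_smul_left, sum_inner]
  have hcval : ‖c‖^2 = (((n:ℝ)+1)⁻¹)^2 * (((n:ℝ)+1) + 2*A + 2*B) := by
    rw [← real_inner_self_eq_norm_sq, hc, real_inner_smul_left, real_inner_smul_right, sum_inner]
    simp only [inner_sum]
    rw [hSS]
    ring
  -- expansion of each term
  have hterm : ∀ J ∈ F, ‖(1 + ρ) • c - ρ • (((m:ℝ)+1)⁻¹ • ∑ j ∈ J, x j)‖^2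
      = (1+ρ)^2 * ‖c‖^2
        - 2*ρ*(1+ρ)*(((m:ℝ)+1)⁻¹ * ∑ j ∈ J, ⟪c, x j⟫)
        + ρ^2*((((m:ℝ)+1)⁻¹)^2 * ∑ i ∈ J, ∑ j ∈ J, ⟪x i, x j⟫) := by
    intro J _
    have hg : ‖(∑ j ∈ J, x j)‖^2 = ∑ i ∈ J, ∑ j ∈ J, ⟪x i, x j⟫ := by
      rw [← real_inner_self_eq_norm_sq, sum_inner]
      exact Finset.sum_congr rfl fun i _ => inner_sum _ _ _
    rw [norm_sub_sq_real, norm_smul, norm_smul, norm_smul, mul_pow, mul_pow, mul_pow, hg]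
    rw [real_inner_smul_left, real_inner_smul_right, real_inner_smul_right, inner_sum]
    rw [Real.norm_eq_abs, Real.norm_eq_abs, Real.norm_eq_abs,
      abs_of_nonneg (by positivity : (0:ℝ) ≤ 1 + ρ), abs_of_nonneg hρ0,
      abs_of_nonneg (by positivity : (0:ℝ) ≤ ((m:ℝ)+1)⁻¹)]
    ring
  -- split the big sum
  have e2 : 2*ρ*(1+ρ)*(((m:ℝ)+1)⁻¹ * ∑ J ∈ F, ∑ j ∈ J, ⟪c, x j⟫)
      = ∑ J ∈ F, 2*ρ*(1+ρ)*(((m:ℝ)+1)⁻¹ * ∑ j ∈ J, ⟪c, x j⟫) := by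
    rw [Finset.mul_sum, Finset.mul_sum]
  have e3 : ρ^2*((((m:ℝ)+1)⁻¹)^2 * ∑ J ∈ F, ∑ i ∈ J, ∑ j ∈ J, ⟪x i, x j⟫)
      = ∑ J ∈ F, ρ^2*((((m:ℝ)+1)⁻¹)^2 * ∑ i ∈ J, ∑ j ∈ J, ⟪x i, x j⟫) := by
    rw [Finset.mul_sum, Finset.mul_sum]
  have hsum_split : ∑ J ∈ F, ‖(1 + ρ) • c - ρ • (((m:ℝ)+1)⁻¹ • ∑ j ∈ J, x j)‖^2
      = (F.card:ℝ)*((1+ρ)^2*‖c‖^2)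
        - 2*ρ*(1+ρ)*(((m:ℝ)+1)⁻¹ * ∑ J ∈ F, ∑ j ∈ J, ⟪c, x j⟫)
        + ρ^2*((((m:ℝ)+1)⁻¹)^2 * ∑ J ∈ F, ∑ i ∈ J, ∑ j ∈ J, ⟪x i, x j⟫) := by
    rw [Finset.sum_congr rfl hterm, Finset.sum_add_distrib, Finset.sum_sub_distrib,
      Finset.sum_const, nsmul_eq_mul, e2, e3]
  -- counting for pairs within F
  have hcnt00 : (F.filter (fun J => (0:Fin (n+1)) ∈ J ∧ (0:Fin (n+1)) ∈ J)).card = n.choose m := by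
    rw [Finset.filter_true_of_mem (fun J hJ => ⟨hmem0 J hJ, hmem0 J hJ⟩)]
    exact hcF
  have hcnt0j : ∀ j : Fin (n+1), j ≠ 0 →
      (F.filter (fun J => (0:Fin (n+1)) ∈ J ∧ j ∈ J)).card = (n-1).choose (m-1) := by
    intro j hj
    have heq : F.filter (fun J => (0:Fin (n+1)) ∈ J ∧ j ∈ J) = F.filter (fun J => j ∈ J) := by
      refine Finset.filter_congr fun J hJ => ?_
      simp [hmem0 J hJ]
    rw [heq]; exact hcj j hj
  have hcntj0 : ∀ j : Fin (n+1), j ≠ 0 →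
      (F.filter (fun J => j ∈ J ∧ (0:Fin (n+1)) ∈ J)).card = (n-1).choose (m-1) := by
    intro j hj
    have heq : F.filter (fun J => j ∈ J ∧ (0:Fin (n+1)) ∈ J) = F.filter (fun J => j ∈ J) := by
      refine Finset.filter_congr fun J hJ => ?_
      simp [hmem0 J hJ]
    rw [heq]; exact hcj j hj
  have hcntjj : ∀ j : Fin (n+1), j ≠ 0 →
      (F.filter (fun J => j ∈ J ∧ j ∈ J)).card = (n-1).choose (m-1) := by
    intro j hj
    have heq : F.filter (fun J => j ∈ J ∧ j ∈ J) = F.filter (fun J => j ∈ J) := by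
      refine Finset.filter_congr fun J hJ => ?_
      simp
    rw [heq]; exact hcj j hj
  -- T1
  have hc1 : (F.filter (fun J => (0:Fin (n+1)) ∈ J)).card = n.choose m := by
    rw [Finset.filter_true_of_mem (fun J hJ => hmem0 J hJ)]
    exact hcF
  have hcx0 : ⟪c, x 0⟫ = ((n:ℝ)+1)⁻¹ * (1 + A) := by rw [hcx 0, hcol0]
  have hcxrest : ∑ j ∈ Finset.univ.erase (0:Fin (n+1)), ⟪c, x j⟫
      = ((n:ℝ)+1)⁻¹ * ((n:ℝ) + A + 2*B) := by
    have h1 : ∑ j : Fin (n+1), ⟪c, x j⟫ = ((n:ℝ)+1)⁻¹ * (((n:ℝ)+1) + 2*A + 2*B) := by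
      rw [Finset.sum_congr rfl (fun j _ => hcx j), ← Finset.mul_sum, Finset.sum_comm, hSS]
    have h2 := Finset.sum_erase_add Finset.univ (fun j => ⟪c, x j⟫) (Finset.mem_univ (0:Fin (n+1)))
    simp only [hcx0, h1] at h2
    linear_combination h2
  have hT1 : ∑ J ∈ F, ∑ j ∈ J, ⟪c, x j⟫
      = ((n:ℝ)+1)⁻¹ * ((n.choose m : ℝ)*(1 + A) + ((n-1).choose (m-1) : ℝ)*((n:ℝ) + A + 2*B)) := by
    rw [sum_mem_swap]
    rw [← Finset.sum_erase_add _ _ (Finset.mem_univ (0:Fin (n+1)))]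
    have hterm0 : ∀ j ∈ Finset.univ.erase (0:Fin (n+1)),
        ((F.filter (fun J => j ∈ J)).card : ℝ) * ⟪c, x j⟫
          = ((n-1).choose (m-1) : ℝ) * ⟪c, x j⟫ := by
      intro j hj
      rw [hcj j (Finset.mem_erase.mp hj).1]
    rw [Finset.sum_congr rfl hterm0, ← Finset.mul_sum, hc1, hcxrest, hcx0]
    ring
  -- T2
  have hrow0 : ∑ j : Fin (n+1),
      ((F.filter (fun J => (0:Fin (n+1)) ∈ J ∧ j ∈ J)).card : ℝ) * ⟪x 0, x j⟫
      = (n.choose m : ℝ) + ((n-1).choose (m-1) : ℝ) * A := by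
    rw [← Finset.sum_erase_add _ _ (Finset.mem_univ (0:Fin (n+1)))]
    have hoth : ∀ j ∈ Finset.univ.erase (0:Fin (n+1)),
        ((F.filter (fun J => (0:Fin (n+1)) ∈ J ∧ j ∈ J)).card : ℝ) * ⟪x 0, x j⟫
          = ((n-1).choose (m-1) : ℝ) * ⟪x 0, x j⟫ := by
      intro j hj
      rw [hcnt0j j (Finset.mem_erase.mp hj).1]
    rw [Finset.sum_congr rfl hoth, ← Finset.mul_sum, hcnt00, hdiag 0, ← hAerase]
    ring
  have hrowi : ∀ i : Fin (n+1), i ≠ 0 →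
      ∑ j : Fin (n+1), ((F.filter (fun J => i ∈ J ∧ j ∈ J)).card : ℝ) * ⟪x i, x j⟫
        = ((n-1).choose (m-1) : ℝ) * ⟪x i, x 0⟫ + ((n-1).choose (m-1) : ℝ)
          + (N2:ℝ) * ∑ j ∈ (Finset.univ.erase (0:Fin (n+1))).erase i, ⟪x i, x j⟫ := by
    intro i hi
    have himem : i ∈ Finset.univ.erase (0:Fin (n+1)) :=
      Finset.mem_erase.mpr ⟨hi, Finset.mem_univ i⟩
    rw [← Finset.sum_erase_add _ _ (Finset.mem_univ (0:Fin (n+1))),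
      ← Finset.sum_erase_add _ _ himem]
    have hoth : ∀ j ∈ (Finset.univ.erase (0:Fin (n+1))).erase i,
        ((F.filter (fun J => i ∈ J ∧ j ∈ J)).card : ℝ) * ⟪x i, x j⟫
          = (N2:ℝ) * ⟪x i, x j⟫ := by
      intro j hj
      have h1 := Finset.mem_erase.mp hj
      have h2 := Finset.mem_erase.mp h1.2
      rw [hcij i j hi h2.1 (Ne.symm h1.1)]
    rw [Finset.sum_congr rfl hoth, ← Finset.mul_sum, hcntjj i hi, hcntj0 i hi, hdiag i]
    ring
  have hA0 : ∑ i ∈ Finset.univ.erase (0:Fin (n+1)), ⟪x i, x 0⟫ = A := by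
    rw [hAerase]; exact Finset.sum_congr rfl fun i _ => hsym i 0
  have hcarde : (Finset.univ.erase (0:Fin (n+1))).card = n := by
    rw [Finset.card_erase_of_mem (Finset.mem_univ 0), Finset.card_univ, Fintype.card_fin]
    omega
  have h2B : ∑ i ∈ Finset.univ.erase (0:Fin (n+1)),
      ∑ j ∈ (Finset.univ.erase (0:Fin (n+1))).erase i, ⟪x i, x j⟫ = 2*B := by
    have hseteq : ((Finset.univ.erase (0:Fin (n+1))) ×ˢ (Finset.univ.erase (0:Fin (n+1)))).filter
        (fun p => p.1 < p.2)
        = Finset.univ.filter (fun p : Fin (n+1) × Fin (n+1) => 0 < p.1 ∧ p.1 < p.2) := by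
      ext p
      simp only [Finset.mem_filter, Finset.mem_product, Finset.mem_erase, Finset.mem_univ,
        and_true, true_and]
      constructor
      · rintro ⟨⟨h1, h2⟩, h3⟩
        exact ⟨Fin.pos_iff_ne_zero.mpr h1, h3⟩
      · rintro ⟨h1, h2⟩
        exact ⟨⟨Fin.pos_iff_ne_zero.mp h1, Fin.pos_iff_ne_zero.mp (lt_trans h1 h2)⟩, h2⟩
    rw [sum_offdiag _ hsym, hseteq, ← hBdef]
  have hT2 : ∑ J ∈ F, ∑ i ∈ J, ∑ j ∈ J, ⟪x i, x j⟫
      = (n.choose m : ℝ) + (n:ℝ)*((n-1).choose (m-1) : ℝ)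
        + 2*((n-1).choose (m-1) : ℝ)*A + 2*(N2:ℝ)*B := by
    rw [sum_mem_swap2]
    rw [← Finset.sum_erase_add _ _ (Finset.mem_univ (0:Fin (n+1)))]
    rw [Finset.sum_congr rfl (fun i hi => hrowi i (Finset.mem_erase.mp hi).1)]
    rw [Finset.sum_add_distrib, Finset.sum_add_distrib, Finset.sum_const, ← Finset.mul_sum,
      ← Finset.mul_sum, hA0, hcarde, h2B, hrow0]
    push_cast
    ring
  -- assemble
  have hsum : ((((n:ℝ)+1))^2*(((m:ℝ)+1))^2) * (∑ J ∈ F,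
      ‖(1 + ρ) • c - ρ • (((m:ℝ)+1)⁻¹ • ∑ j ∈ J, x j)‖^2)
      = (((m:ℝ)+1))^2*(1+ρ)^2*(n.choose m:ℝ)*((((n:ℝ)+1))+2*A+2*B)
        - 2*ρ*(1+ρ)*(((m:ℝ)+1))*(((n:ℝ)+1))*((n.choose m:ℝ)*(1+A)
            +((n-1).choose (m-1):ℝ)*((n:ℝ)+A+2*B))
        + ρ^2*(((n:ℝ)+1))^2*((n.choose m:ℝ)+(n:ℝ)*((n-1).choose (m-1):ℝ)
            +2*((n-1).choose (m-1):ℝ)*A+2*(N2:ℝ)*B) := by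
    rw [hsum_split, hcval, hT1, hT2, hcF]
    field_simp
  have hb1 : (n:ℝ) * ((n-1).choose (m-1):ℝ) = (m:ℝ) * (n.choose m:ℝ) := by
    exact_mod_cast hrel1
  have hb2 : ((n:ℝ)-1)*(N2:ℝ) = ((m:ℝ)-1)*((n-1).choose (m-1):ℝ) := by
    have h := congrArg (Nat.cast : ℕ → ℝ) hrel2
    push_cast [Nat.cast_sub (by omega : 1 ≤ n), Nat.cast_sub (by omega : 1 ≤ m)] at h
    exact h
  exact final_scalar (n:ℝ) (m:ℝ) ρ A B (n.choose m : ℝ) ((n-1).choose (m-1) : ℝ) (N2:ℝ) _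
    hncast hmcast hmncast hρ0 hρ2 (by positivity) hb1 hb2 (by linarith) hsum
end
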